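/- Let g : ℝᵈ → ℝ be C² with Hessian satisfying Hess(g)(x) ≥ λ I for all x with λ ≥ 0 (g convex), and F_σ as the logistic smoothing. Then the Hessian of V_σ(x) = −log F_σ(x) + ‖x‖²/2 satisfies Hess(V_σ)(x) ≥ I for all x, i.e., V_σ is 1-strongly convex. -/

import Mathlib

open Matrix

lemma psd_smul {n : Type*} [Fintype n] {c : ℝ} (hc : 0 ≤ c) {M : Matrix n n ℝ}
    (hM : M.PosSemidef) : (c • M).PosSemidef := by
  rw [Matrix.posSemidef_iff_dotProduct_mulVec]
  constructor
  · unfold Matrix.IsHermitian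
    rw [Matrix.conjTranspose_smul]
    rw [hM.1.eq]
    simp
  · intro x
    simp only [Matrix.smul_mulVec, dotProduct_smul, smul_eq_mul]
    exact mul_nonneg hc (hM.dotProduct_mulVec_nonneg x)

lemma psd_vmv {n : Type*} [Fintype n] (v : n → ℝ) :
    (Matrix.vecMulVec v v).PosSemidef := by
  rw [Matrix.posSemidef_iff_dotProduct_mulVec]
  constructor
  · unfold Matrix.IsHermitian
    ext i j
    simp [Matrix.vecMulVec, mul_comm]
  · intro x
    have h : (Matrix.vecMulVec v v).mulVec x = (v ⬝ᵥ x) • v := by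
      ext i
      simp only [Matrix.mulVec, Matrix.vecMulVec, dotProduct, Matrix.of_apply, Pi.smul_apply, smul_eq_mul]
      rw [Finset.sum_mul]
      exact Finset.sum_congr rfl fun j _ => by ring
    rw [h]
    simp only [dotProduct_smul, smul_eq_mul, star_trivial]
    have : x ⬝ᵥ v = v ⬝ᵥ x := dotProduct_comm _ _
    rw [this]
    exact mul_self_nonneg _

noncomputable def Fsig {E : Type*} (g : E → ℝ) (σ μ : ℝ) (x : E) : ℝ :=
  (1 + Real.exp ((-μ + g x) / σ))⁻¹

theorem stmt15 {d : ℕ} (g : EuclideanSpace ℝ (Fin d) → ℝ)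
    (σ μ : ℝ) (hσ : 0 < σ) (hμ : 0 < μ)
    (gradg : EuclideanSpace ℝ (Fin d) → Fin d → ℝ)
    (Hg : EuclideanSpace ℝ (Fin d) → Matrix (Fin d) (Fin d) ℝ)
    (lam : ℝ) (hlam : 0 ≤ lam)
    (hsymm : ∀ x, (Hg x).IsSymm)
    (hconv : ∀ x, (Hg x - lam • 1).PosSemidef) :
    ∀ x,
      ((((1 - Fsig g σ μ x) * Fsig g σ μ x / σ ^ 2) •
          Matrix.vecMulVec (gradg x) (gradg x)
        + ((1 - Fsig g σ μ x) / σ) • Hg x + 1)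
        - (1 : Matrix (Fin d) (Fin d) ℝ)).PosSemidef := by
  intro x
  have hfpos : 0 < Fsig g σ μ x := by
    unfold Fsig
    positivity
  have hfle : Fsig g σ μ x ≤ 1 := by
    unfold Fsig
    rw [inv_le_one_iff₀]
    right
    linarith [Real.exp_pos ((-μ + g x) / σ)]
  have h1f : 0 ≤ 1 - Fsig g σ μ x := by linarith
  have hHg : (Hg x).PosSemidef := by
    have := (hconv x).add (psd_smul hlam Matrix.PosSemidef.one)
    simpa using this
  rw [add_sub_cancel_right]
  exact ((psd_smul (by positivity) (psd_vmv (gradg x)))).add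
    (psd_smul (by positivity) hHg)
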